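/- Let H, V be subspaces of a real inner product space with dim V ≥ 2, let X₀ ∈ H and e ∈ V be unit vectors, and let β̃ : H × H → ℝ, γ̃ : V × V → ℝ be symmetric bilinear forms with β̃₀ = β̃(X₀,X₀), γ̃₀ = γ̃(e,e). Suppose that for some δ ∈ ℝ with δ ≠ 0 (playing the role of βγ − λ²) one has β̃(Y,Z)(γ̃(V,W) − ⟨V,W⟩γ̃₀) = δ⟨Y,X₀⟩⟨Z,X₀⟩⟨PV,PW⟩ for all Y,Z ∈ H and V,W ∈ V, where P is the orthogonal projection of V onto {e}^⊥. Then β̃₀ ≠ 0, β̃(Y,Z) = ⟨Y,X₀⟩⟨Z,X₀⟩β̃₀ for all Y,Z ∈ H, and β̃₀·γ̃(V,W) = ⟨V,W⟩(β̃₀γ̃₀ + δ) − δ⟨V,e⟩⟨W,e⟩ for all V,W ∈ V. -/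

import Mathlib

open scoped RealInnerProductSpace

theorem stmt_5 {E : Type*} [NormedAddCommGroup E] [InnerProductSpace ℝ E]
    (H V : Submodule ℝ E) (hV2 : 2 ≤ Module.finrank ℝ V)
    (X₀ : E) (hX₀ : X₀ ∈ H) (hX₀n : ‖X₀‖ = 1)
    (e : E) (he : e ∈ V) (hen : ‖e‖ = 1)
    (βt γt : E →ₗ[ℝ] E →ₗ[ℝ] ℝ)
    (hβsymm : ∀ Y Z : E, βt Y Z = βt Z Y)
    (hγsymm : ∀ v w : E, γt v w = γt w v)
    (δ : ℝ) (hδ : δ ≠ 0)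
    (hmain : ∀ Y ∈ H, ∀ Z ∈ H, ∀ v ∈ V, ∀ w ∈ V,
      βt Y Z * (γt v w - ⟪v, w⟫ * γt e e) =
        δ * ⟪Y, X₀⟫ * ⟪Z, X₀⟫ *
          ⟪v - ⟪v, e⟫ • e, w - ⟪w, e⟫ • e⟫) :
    βt X₀ X₀ ≠ 0 ∧
    (∀ Y ∈ H, ∀ Z ∈ H, βt Y Z = ⟪Y, X₀⟫ * ⟪Z, X₀⟫ * βt X₀ X₀) ∧
    (∀ v ∈ V, ∀ w ∈ V, βt X₀ X₀ * γt v w =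
      ⟪v, w⟫ * (βt X₀ X₀ * γt e e + δ) - δ * ⟪v, e⟫ * ⟪w, e⟫) := by
  have hX₀i : ⟪X₀, X₀⟫ = 1 := by
    rw [real_inner_self_eq_norm_sq, hX₀n]; norm_num
  have hei : ⟪e, e⟫ = 1 := by
    rw [real_inner_self_eq_norm_sq, hen]; norm_num
  -- find u ∈ V, u ≠ 0, ⟪u, e⟫ = 0
  have hVfd : FiniteDimensional ℝ V := Module.finite_of_finrank_pos (by omega)
  set e' : V := ⟨e, he⟩ with he'
  have he'0 : e' ≠ 0 := by
    intro h
    have : ‖e'‖ = 0 := by rw [h, norm_zero]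
    rw [show ‖e'‖ = ‖e‖ from rfl, hen] at this; norm_num at this
  have hfr : Module.finrank ℝ ((ℝ ∙ e')ᗮ : Submodule ℝ V) ≠ 0 := by
    have h1 := Submodule.finrank_add_finrank_orthogonal (K := (ℝ ∙ e' : Submodule ℝ V))
    rw [finrank_span_singleton he'0] at h1
    omega
  have hbot : ((ℝ ∙ e')ᗮ : Submodule ℝ V) ≠ ⊥ := by
    intro h; rw [h, finrank_bot] at hfr; exact hfr rfl
  obtain ⟨u, huW, hu0⟩ := Submodule.ne_bot_iff _ |>.mp hbot
  have hue : ⟪(u : E), e⟫ = 0 := by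
    have := (Submodule.mem_orthogonal_singleton_iff_inner_left (𝕜 := ℝ)).mp huW
    exact this
  have huV : (u : E) ∈ V := u.2
  have hu0' : (u : E) ≠ 0 := fun h => hu0 (Subtype.coe_injective h)
  set r : ℝ := ⟪(u : E), (u : E)⟫ with hr
  have hrpos : r ≠ 0 := fun h => hu0' (inner_self_eq_zero.mp h)
  -- key identity restricted to u
  have key : ∀ Y ∈ H, ∀ Z ∈ H,
      βt Y Z * (γt u u - r * γt e e) = δ * ⟪Y, X₀⟫ * ⟪Z, X₀⟫ * r := by
    intro Y hY Z hZ
    have := hmain Y hY Z hZ u huV u huV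
    simpa [hue, hr, real_inner_self_eq_norm_sq] using this
  have h0 := key X₀ hX₀ X₀ hX₀
  rw [hX₀i] at h0
  have hβ0 : βt X₀ X₀ ≠ 0 := by
    intro h; rw [h] at h0
    simp at h0
    rcases h0 with h|h
    · exact hδ h
    · exact hrpos h
  have hc : (γt u u - r * γt e e) ≠ 0 := by
    intro h; rw [h, mul_zero] at h0
    rcases mul_eq_zero.mp h0.symm with h'|h'
    · simp at h'; exact hδ h'
    · exact hrpos h'
  refine ⟨hβ0, ?_, ?_⟩
  · intro Y hY Z hZ
    have hk := key Y hY Z hZ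
    apply mul_right_cancel₀ hc
    rw [hk]
    linear_combination (-(⟪Y, X₀⟫ * ⟪Z, X₀⟫) : ℝ) * h0
  · intro v hv w hw
    have hm := hmain X₀ hX₀ X₀ hX₀ v hv w hw
    rw [hX₀i] at hm
    have hexp : ⟪v - ⟪v, e⟫ • e, w - ⟪w, e⟫ • e⟫ = ⟪v, w⟫ - ⟪v, e⟫ * ⟪w, e⟫ := by
      simp [inner_sub_left, inner_sub_right, real_inner_smul_left, real_inner_smul_right,
        hei, real_inner_comm e, hen]
    rw [hexp] at hm
    linarith [hm]
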